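/- arXiv:2003.05826 — 2 statements merged into one kernel-verified Lean document; each statement's English description precedes it below -/
import Mathlib

section
/- Let n ∈ ℕ and let 𝒞 be a family of subsets of [n] = {1, 2, …, n} with |𝒞| > n. Then there exists a set A ∈ 𝒞 such that A ⊆ ⋃_{B ∈ 𝒞, B ≠ A} B. -/
/-- If `𝒞` is a family of subsets of `[n]` with `|𝒞| > n`, then some
`A ∈ 𝒞` is contained in the union of the other members of `𝒞`. -/
theorem stmt0 (n : ℕ) (C : Finset (Finset (Fin n))) (hC : n < C.card) :
    ∃ A ∈ C, A ⊆ (C.erase A).biUnion id := by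
  by_contra h
  push_neg at h
  have hex : ∀ A ∈ C, ∃ x ∈ A, ∀ B ∈ C, B ≠ A → x ∉ B := by
    intro A hA
    obtain ⟨x, hxA, hx⟩ := Finset.not_subset.mp (h A hA)
    refine ⟨x, hxA, fun B hB hBA hxB => hx ?_⟩
    exact Finset.mem_biUnion.mpr ⟨B, Finset.mem_erase.mpr ⟨hBA, hB⟩, hxB⟩
  choose f hf1 hf2 using hex
  have hinj : Function.Injective (fun A : {A // A ∈ C} => f A.1 A.2) := by
    rintro ⟨A, hA⟩ ⟨B, hB⟩ heq
    simp only at heq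
    by_contra hne
    have hne' : A ≠ B := fun e => hne (by simpa using e)
    exact hf2 B hB A hA hne' (heq ▸ hf1 A hA)
  have hcard := Fintype.card_le_of_injective _ hinj
  rw [Fintype.card_coe, Fintype.card_fin] at hcard
  omega
end

section
/- Let G = (R ∪ B, E) be a red-blue graph and let G* be obtained from G by applying a color-preserving merge operation to two arbitrary vertices v and v' of the same color. If G contains a red-blue dominating set of size at most k, then G* also contains a red-blue dominating set of size at most k. -/
/-- A red-blue graph: fixed color classes of red and blue vertices (each named by
natural numbers) and edges, each joining a red vertex (first component) and a blue
vertex (second component). -/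
structure RBGraph where
  R : Finset ℕ
  B : Finset ℕ
  E : Finset (ℕ × ℕ)

/-- `G` has a red-blue dominating set of size at most `k`: a set of at most `k` red
vertices such that every blue vertex has a neighbor in it. -/
def HasRBDS (G : RBGraph) (k : ℕ) : Prop :=
  ∃ S : Finset ℕ, S ⊆ G.R ∧ S.card ≤ k ∧ ∀ b ∈ G.B, ∃ r ∈ S, (r, b) ∈ G.E

/-- Merging the red vertices `v, v'` into the new red vertex `x`. -/
def redMerge (G : RBGraph) (v v' x : ℕ) : RBGraph where
  R := insert x ((G.R.erase v).erase v')
  B := G.B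
  E := G.E.image (fun e => (if e.1 = v ∨ e.1 = v' then x else e.1, e.2))

/-- Merging the blue vertices `v, v'` into the new blue vertex `x`. -/
def blueMerge (G : RBGraph) (v v' x : ℕ) : RBGraph where
  R := G.R
  B := insert x ((G.B.erase v).erase v')
  E := G.E.image (fun e => (e.1, if e.2 = v ∨ e.2 = v' then x else e.2))

/-- A single color-preserving merge operation on two vertices of the same color
(the new vertex is fresh). -/
def RBMergeStep (G G' : RBGraph) : Prop :=
  (∃ v v' x : ℕ, v ∈ G.R ∧ v' ∈ G.R ∧ x ∉ (G.R.erase v).erase v' ∧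
      G' = redMerge G v v' x) ∨
  (∃ v v' x : ℕ, v ∈ G.B ∧ v' ∈ G.B ∧ x ∉ (G.B.erase v).erase v' ∧
      G' = blueMerge G v v' x)

/-- If `G*` is obtained from the red-blue graph `G` by a
color-preserving merge operation on two vertices of the same color and `G` has a
red-blue dominating set of size at most `k`, then so does `G*`. -/
theorem stmt17 (G : RBGraph) (hwf : ∀ e ∈ G.E, e.1 ∈ G.R ∧ e.2 ∈ G.B)
    (Gstar : RBGraph) (hmerge : RBMergeStep G Gstar) (k : ℕ)
    (h : HasRBDS G k) : HasRBDS Gstar k := by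
  obtain ⟨S, hSR, hSk, hdom⟩ := h
  rcases hmerge with ⟨v, v', x, hv, hv', hx, rfl⟩ | ⟨v, v', x, hv, hv', hx, rfl⟩
  · by_cases hmem : v ∈ S ∨ v' ∈ S
    · refine ⟨insert x ((S.erase v).erase v'), ?_, ?_, ?_⟩
      · intro s hs
        simp only [redMerge, Finset.mem_insert, Finset.mem_erase] at hs ⊢
        rcases hs with rfl | ⟨h1, h2, h3⟩
        · left; rfl
        · exact Or.inr ⟨h1, h2, hSR h3⟩
      · calc (insert x ((S.erase v).erase v')).card
            ≤ ((S.erase v).erase v').card + 1 := Finset.card_insert_le _ _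
          _ ≤ k := by
              rcases hmem with hm | hm
              · have h2 : ((S.erase v).erase v').card ≤ (S.erase v).card :=
                  Finset.card_le_card (Finset.erase_subset _ _)
                have h1 : (S.erase v).card = S.card - 1 :=
                  Finset.card_erase_of_mem hm
                have h3 : 1 ≤ S.card := Finset.card_pos.2 ⟨v, hm⟩
                omega
              · have h2 : ((S.erase v).erase v').card ≤ (S.erase v').card :=
                  Finset.card_le_card
                    (Finset.erase_subset_erase _ (Finset.erase_subset _ _))
                have h1 : (S.erase v').card = S.card - 1 :=
                  Finset.card_erase_of_mem hm
                have h3 : 1 ≤ S.card := Finset.card_pos.2 ⟨v', hm⟩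
                omega
      · intro b hb
        obtain ⟨r, hrS, hrE⟩ := hdom b hb
        by_cases hr : r = v ∨ r = v'
        · refine ⟨x, Finset.mem_insert_self _ _, ?_⟩
          simp only [redMerge, Finset.mem_image]
          exact ⟨(r, b), hrE, by simp [hr]⟩
        · push_neg at hr
          refine ⟨r, ?_, ?_⟩
          · exact Finset.mem_insert_of_mem (Finset.mem_erase.2 ⟨hr.2,
              Finset.mem_erase.2 ⟨hr.1, hrS⟩⟩)
          · simp only [redMerge, Finset.mem_image]
            exact ⟨(r, b), hrE, by simp [hr.1, hr.2]⟩
    · push_neg at hmem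
      refine ⟨S, ?_, hSk, ?_⟩
      · intro s hs
        simp only [redMerge, Finset.mem_insert, Finset.mem_erase]
        exact Or.inr ⟨fun h => hmem.2 (h ▸ hs), fun h => hmem.1 (h ▸ hs), hSR hs⟩
      · intro b hb
        obtain ⟨r, hrS, hrE⟩ := hdom b hb
        have hr1 : r ≠ v := fun h => hmem.1 (h ▸ hrS)
        have hr2 : r ≠ v' := fun h => hmem.2 (h ▸ hrS)
        refine ⟨r, hrS, ?_⟩
        simp only [redMerge, Finset.mem_image]
        exact ⟨(r, b), hrE, by simp [hr1, hr2]⟩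
  · refine ⟨S, hSR, hSk, ?_⟩
    intro b hb
    simp only [blueMerge, Finset.mem_insert, Finset.mem_erase] at hb
    rcases hb with rfl | ⟨hb1, hb2, hb3⟩
    · obtain ⟨r, hrS, hrE⟩ := hdom v hv
      refine ⟨r, hrS, ?_⟩
      simp only [blueMerge, Finset.mem_image]
      exact ⟨(r, v), hrE, by simp⟩
    · obtain ⟨r, hrS, hrE⟩ := hdom b hb3
      refine ⟨r, hrS, ?_⟩
      simp only [blueMerge, Finset.mem_image]
      exact ⟨(r, b), hrE, by simp [hb1, hb2]⟩
end
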